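/- Let Z be a finite set of points in P^n (n ≥ 1), d a positive integer, and suppose that Ex.C(Z,d) is attained by a collection of linear subspaces H_1,...,H_s (together with leftover singleton points) minimizing |W| + ∑_i (d·dim H_i + 1) where W = Z \ ∪H_i. Then for all subsets J ⊆ {1,...,s} with |J| ≥ 2, ∑_{j∈J}(d·dim H_j + 1) ≤ d·dim Span(∪_{j∈J} H_j) + 1; in particular for n = 2 and d ≥ 1 at most one positive dimensional subspace occurs among the H_i. -/
import Mathlib


open Module
open scoped LinearAlgebra.Projectivization

/-- Suppose `Ex.C(Z,d)` is attained by positive dimensional linear subspaces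
`H_1,...,H_s` together with leftover singleton points `W = Z \ ∪ H_i`, i.e. the pair `(s, W)`
minimizes `|W| + ∑ (d·dim H_i + 1)` among all such covers of `Z`. Then for every `J ⊆ s`
with `|J| ≥ 2`, `∑_{H∈J} (d·dim H + 1) ≤ d·dim Span(∪_{H∈J} H) + 1`; in particular for
`n = 2` (and `d ≥ 1`) at most one positive dimensional subspace occurs. -/
theorem stmt8 (K : Type*) [Field K] (n : ℕ) (hn : 0 < n) (d : ℕ) (hd : 1 ≤ d)
    (Z : Finset (ℙ K (Fin (n + 1) → K)))
    (s : Finset (Submodule K (Fin (n + 1) → K)))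
    (W : Finset (ℙ K (Fin (n + 1) → K)))
    (hpos : ∀ H ∈ s, 2 ≤ Module.finrank K H)
    (hWZ : W ⊆ Z)
    (hcover : ∀ z ∈ Z, z ∈ W ∨ ∃ H ∈ s, Projectivization.submodule z ≤ H)
    (hmin : ∀ (s' : Finset (Submodule K (Fin (n + 1) → K)))
        (W' : Finset (ℙ K (Fin (n + 1) → K))),
      (∀ H ∈ s', 2 ≤ Module.finrank K H) → W' ⊆ Z →
      (∀ z ∈ Z, z ∈ W' ∨ ∃ H ∈ s', Projectivization.submodule z ≤ H) →
      W.card + ∑ H ∈ s, (d * (Module.finrank K H - 1) + 1) ≤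
        W'.card + ∑ H ∈ s', (d * (Module.finrank K H - 1) + 1)) :
    (∀ J ⊆ s, 2 ≤ J.card →
      ∑ H ∈ J, (d * (Module.finrank K H - 1) + 1) ≤
        d * (Module.finrank K ↥(J.sup id) - 1) + 1) ∧
    (n = 2 → s.card ≤ 1) := by
  classical
  have main : ∀ J ⊆ s, 2 ≤ J.card →
      ∑ H ∈ J, (d * (Module.finrank K H - 1) + 1) ≤
        d * (Module.finrank K ↥(J.sup id) - 1) + 1 := by
    intro J hJs hJ2
    obtain ⟨H0, hH0⟩ := Finset.card_pos.mp (by omega : 0 < J.card)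
    set S := J.sup id with hS
    have hSrk : 2 ≤ Module.finrank K S := by
      have h1 : H0 ≤ S := Finset.le_sup (f := id) hH0
      exact le_trans (hpos H0 (hJs hH0)) (Submodule.finrank_mono h1)
    set s' := insert S (s \ J) with hs'
    have hpos' : ∀ H ∈ s', 2 ≤ Module.finrank K H := by
      intro H hH
      rcases Finset.mem_insert.mp hH with h | h
      · subst h; exact hSrk
      · exact hpos H (Finset.mem_sdiff.mp h).1
    have hcover' : ∀ z ∈ Z, z ∈ W ∨ ∃ H ∈ s', Projectivization.submodule z ≤ H := by
      intro z hz
      rcases hcover z hz with h | ⟨H, hH, hle⟩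
      · exact Or.inl h
      · by_cases hHJ : H ∈ J
        · exact Or.inr ⟨S, Finset.mem_insert_self _ _,
            le_trans hle (Finset.le_sup (f := id) hHJ)⟩
        · exact Or.inr ⟨H, Finset.mem_insert_of_mem (Finset.mem_sdiff.mpr ⟨hH, hHJ⟩), hle⟩
    have hmins := hmin s' W hpos' hWZ hcover'
    have hsplit : ∑ H ∈ s \ J, (d * (Module.finrank K H - 1) + 1)
        + ∑ H ∈ J, (d * (Module.finrank K H - 1) + 1)
        = ∑ H ∈ s, (d * (Module.finrank K H - 1) + 1) :=
      Finset.sum_sdiff hJs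
    have hs'le : ∑ H ∈ s', (d * (Module.finrank K H - 1) + 1)
        ≤ (d * (Module.finrank K S - 1) + 1)
          + ∑ H ∈ s \ J, (d * (Module.finrank K H - 1) + 1) := by
      by_cases hSin : S ∈ s \ J
      · rw [hs', Finset.insert_eq_self.mpr hSin]
        exact Nat.le_add_left _ _
      · rw [hs', Finset.sum_insert hSin]
    omega
  refine ⟨main, ?_⟩
  intro hn2
  by_contra hcard
  push_neg at hcard
  have h1 := main s le_rfl (by omega)
  have hub : Module.finrank K ↥(s.sup id) ≤ 3 := by
    have h := Submodule.finrank_le (s.sup id)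
    rw [Module.finrank_fin_fun] at h
    omega
  have hlb : s.card * (d + 1) ≤ ∑ H ∈ s, (d * (Module.finrank K H - 1) + 1) := by
    calc s.card * (d + 1) = ∑ _H ∈ s, (d + 1) := by
          rw [Finset.sum_const, smul_eq_mul]
      _ ≤ _ := Finset.sum_le_sum (fun H hH => by
          have h2 := hpos H hH
          have h3 : 1 ≤ Module.finrank K H - 1 := by omega
          have := Nat.mul_le_mul_left d h3
          omega)
  have h4 : 2 * (d + 1) ≤ s.card * (d + 1) :=
    Nat.mul_le_mul_right _ (by omega)
  have h5 : d * (Module.finrank K ↥(s.sup id) - 1) ≤ d * 2 :=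
    Nat.mul_le_mul_left d (by omega)
  omega
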